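/- Let ℱ be a sheaf of abelian groups on a topological space X and {Ω_i} an open covering of X. If ℱ|_{Ω_i} is flabby on Ω_i for every i, then ℱ is flabby on X. -/

import Mathlib

open CategoryTheory TopologicalSpace Opposite

/-- A presheaf of abelian groups `F` is flabby on an open set `Ω` if for every
open `U ⊆ Ω` the restriction map `F(Ω) → F(U)` is surjective.  For `Ω = ⊤` this
is the usual flabbiness of `F` on the whole space. -/
def FlabbyOn {X : TopCat} (F : TopCat.Presheaf AddCommGrpCat X) (Ω : Opens X) : Prop :=
  ∀ (U : Opens X) (h : U ≤ Ω), Function.Surjective (F.map (homOfLE h).op)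

section Aux

universe w

lemma res_res {X : TopCat} (F : TopCat.Presheaf AddCommGrpCat X) {A B C : Opens X}
    (hAB : A ≤ B) (hBC : B ≤ C) (t : F.obj (op C)) :
    F.map (homOfLE hAB).op (F.map (homOfLE hBC).op t)
      = F.map (homOfLE (hAB.trans hBC)).op t := by
  rw [← comp_apply, ← F.map_comp, ← op_comp, homOfLE_comp]

/-- An element of an abelian group, as a hom from `ℤ`. -/
def elHom {A : AddCommGrpCat.{w}} (a : A) : AddCommGrpCat.of (ULift.{w} ℤ) ⟶ A :=
  AddCommGrpCat.ofHom ((zmultiplesHom A a).comp AddEquiv.ulift.toAddMonoidHom)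

lemma elHom_comp {A B : AddCommGrpCat.{w}} (a : A) (f : A ⟶ B) :
    elHom a ≫ f = elHom (f a) := by
  refine AddCommGrpCat.hom_ext (AddMonoidHom.ext fun n => ?_)
  show f ((n.down : ℤ) • a) = (n.down : ℤ) • f a
  exact map_zsmul f.hom _ _

lemma elHom_one {A : AddCommGrpCat.{w}} (a : A) : elHom a ⟨1⟩ = a := one_zsmul a

/-- Gluing sections of a sheaf of abelian groups, with no universe restriction. -/
lemma glue_sections {X : TopCat} (F : TopCat.Sheaf AddCommGrpCat X) {I : Type*}
    (U : I → Opens X) (V : Opens X) (hle : ∀ i, U i ≤ V) (hV : ∀ x ∈ V, ∃ i, x ∈ U i)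
    (sf : ∀ i, F.val.obj (op (U i)))
    (compat : ∀ i j, F.val.map (homOfLE (inf_le_left : U i ⊓ U j ≤ U i)).op (sf i)
      = F.val.map (homOfLE inf_le_right).op (sf j)) :
    ∃ s : F.val.obj (op V), ∀ i, F.val.map (homOfLE (hle i)).op s = sf i := by
  have hP : CategoryTheory.Presheaf.IsSheaf (Opens.grothendieckTopology X) F.val := F.cond
  have hf : Sieve.ofArrows U (fun i => homOfLE (hle i)) ∈
      (Opens.grothendieckTopology X) V := by
    intro x hx
    obtain ⟨i, hi⟩ := hV x hx
    exact ⟨U i, homOfLE (hle i), ⟨U i, 𝟙 _, homOfLE (hle i), Presieve.ofArrows.mk i,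
      Category.id_comp _⟩, hi⟩
  obtain ⟨g, hg, -⟩ := hP.existsUnique_amalgamation_ofArrows
    (fun i => homOfLE (hle i)) hf (fun i => elHom (sf i)) (by
      intro W i j a b _
      rw [elHom_comp, elHom_comp]
      congr 1
      have ha : (a : W ⟶ U i) = homOfLE a.le := rfl
      have hb : (b : W ⟶ U j) = homOfLE b.le := rfl
      rw [ha, hb,
        show homOfLE a.le = homOfLE (le_inf a.le b.le) ≫
          homOfLE (inf_le_left : U i ⊓ U j ≤ U i) from rfl,
        show homOfLE b.le = homOfLE (le_inf a.le b.le) ≫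
          homOfLE (inf_le_right : U i ⊓ U j ≤ U j) from rfl,
        op_comp, op_comp, F.val.map_comp, F.val.map_comp, comp_apply, comp_apply, compat])
  refine ⟨g ⟨1⟩, fun i => ?_⟩
  have h1 := congrArg (fun φ => φ (⟨1⟩ : ULift ℤ)) (hg i)
  exact h1.trans (elHom_one (sf i))

variable {X : TopCat} (F : TopCat.Sheaf AddCommGrpCat X)

/-- The poset of extensions of a section `s` on `U`. -/
structure SecExt (U : Opens X) (s : F.val.obj (op U)) where
  V : Opens X
  t : F.val.obj (op V)
  hUV : U ≤ V
  ht : F.val.map (homOfLE hUV).op t = s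

variable {F} {U : Opens X} {s : F.val.obj (op U)}

/-- The extension order. -/
def SecExtLE (a b : SecExt F U s) : Prop :=
  ∃ h : a.V ≤ b.V, F.val.map (homOfLE h).op b.t = a.t

end Aux

/-- If a sheaf of abelian groups is flabby on each member of an open covering of
`X`, then it is flabby on `X`. -/
theorem flabby_of_locally_flabby {X : TopCat} (F : TopCat.Sheaf AddCommGrpCat X)
    {ι : Type*} (Ω : ι → Opens X) (hcov : iSup Ω = ⊤)
    (h : ∀ i, FlabbyOn F.val (Ω i)) : FlabbyOn F.val ⊤ := by
  intro U hU s
  have base : SecExt F U s := ⟨U, s, le_rfl, by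
    rw [show homOfLE (le_refl U) = 𝟙 U from rfl, op_id, F.val.map_id]; rfl⟩
  -- Zorn's lemma
  obtain ⟨m, hm⟩ := exists_maximal_of_chains_bounded
    (r := SecExtLE (F := F) (U := U) (s := s))
    (fun c hc => by
      rcases c.eq_empty_or_nonempty with rfl | ⟨p₀, hp₀⟩
      · exact ⟨base, fun a ha => absurd ha (by simp)⟩
      · obtain ⟨gl, hgl⟩ := glue_sections F (fun p : c => p.1.V) (⨆ p : c, p.1.V)
          (fun p => le_iSup (fun p : c => p.1.V) p) (fun x hx => by simpa using hx)
          (fun p => p.1.t)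
          (by
            intro p q
            dsimp only
            rcases eq_or_ne p q with rfl | hne
            · rfl
            · rcases hc p.2 q.2 (fun e => hne (Subtype.ext e)) with ⟨hle, ht⟩ | ⟨hle, ht⟩
              · rw [← ht, res_res]
              · rw [← ht, res_res])
        have hUsup : U ≤ ⨆ p : c, p.1.V :=
          le_trans p₀.hUV (le_iSup (fun p : c => p.1.V) ⟨p₀, hp₀⟩)
        refine ⟨⟨⨆ p : c, p.1.V, gl, hUsup, ?_⟩,
          fun a ha => ⟨le_iSup (fun p : c => p.1.V) ⟨a, ha⟩, hgl ⟨a, ha⟩⟩⟩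
        have : F.val.map (homOfLE hUsup).op gl
            = F.val.map (homOfLE p₀.hUV).op
              (F.val.map (homOfLE (le_iSup (fun p : c => p.1.V) ⟨p₀, hp₀⟩)).op gl) := by
          rw [res_res]
        rw [this, hgl ⟨p₀, hp₀⟩, p₀.ht])
    (fun {a b c} hab hbc => by
      obtain ⟨h₁, e₁⟩ := hab
      obtain ⟨h₂, e₂⟩ := hbc
      exact ⟨h₁.trans h₂, by rw [← e₁, ← e₂, res_res]⟩)
  -- the maximal extension is global
  have hV : m.V = ⊤ := by
    by_contra hne
    have : ∃ x : X, x ∉ m.V := by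
      by_contra hx
      push_neg at hx
      exact hne (le_antisymm le_top fun x _ => hx x)
    obtain ⟨x, hx⟩ := this
    have hxΩ : x ∈ iSup Ω := by rw [hcov]; trivial
    obtain ⟨i, hi⟩ := Opens.mem_iSup.mp hxΩ
    obtain ⟨t', ht'⟩ := h i (m.V ⊓ Ω i) inf_le_right
      (F.val.map (homOfLE (inf_le_left : m.V ⊓ Ω i ≤ m.V)).op m.t)
    -- glue m.t and t' over m.V ⊔ Ω i
    obtain ⟨gl, hgl⟩ := glue_sections F
      (fun b : Bool => bif b then m.V else Ω i) (m.V ⊔ Ω i)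
      (fun b => by cases b <;> simp)
      (fun y hy => by
        rcases (show y ∈ m.V ∨ y ∈ Ω i by simpa using hy) with hy | hy
        exacts [⟨true, hy⟩, ⟨false, hy⟩])
      (fun b => match b with
        | true => m.t
        | false => t')
      (by
        intro b₁ b₂
        cases b₁ <;> cases b₂
        · -- Ω i ⊓ Ω i
          rfl
        · -- Ω i ⊓ m.V
          have h2 := congrArg (F.val.map (homOfLE
            (show Ω i ⊓ m.V ≤ m.V ⊓ Ω i from le_inf inf_le_right inf_le_left)).op) ht'
          rw [res_res, res_res] at h2
          exact h2
        · -- m.V ⊓ Ω i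
          exact ht'.symm
        · -- m.V ⊓ m.V
          rfl)
    have hmem : SecExtLE m ⟨m.V ⊔ Ω i, gl, m.hUV.trans le_sup_left, by
        have e1 : F.val.map (homOfLE (m.hUV.trans (le_sup_left : m.V ≤ m.V ⊔ Ω i))).op gl
            = F.val.map (homOfLE m.hUV).op
              (F.val.map (homOfLE (le_sup_left : m.V ≤ m.V ⊔ Ω i)).op gl) :=
          (res_res F.val m.hUV le_sup_left gl).symm
        exact e1.trans (((congrArg (F.val.map (homOfLE m.hUV).op) (hgl true)).trans m.ht))⟩ :=
      ⟨le_sup_left, hgl true⟩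
    obtain ⟨hle, -⟩ := hm _ hmem
    exact hx (hle (show x ∈ m.V ⊔ Ω i by simpa using Or.inr hi))
  refine ⟨F.val.map (homOfLE hV.ge).op m.t, ?_⟩
  rw [res_res]
  exact m.ht
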